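/- Let v_k = (1/q_k)/Σ_{j=1}^K (1/q_j) with 0 < q_k < 1 for all k, p_k = 1 − q_k, v = (v_1,…,v_K), and A = I − 1ᵀ v (where 1 is the row vector of ones). Then (I − vᵀ1) diag(v_1 p_1/q_1, …, v_K p_K/q_K)(I − 1ᵀ v) = (∂v/∂q)ᵀ diag(p_1 q_1/v_1, …, p_K q_K/v_K)(∂v/∂q), where ∂v/∂q is the Jacobian matrix (∂v_k/∂q_j). -/

import Mathlib

open Matrix

/-- equality of the two expressions for the asymptotic
covariance of the drop-the-loser rule:
`(I − vᵀ1) diag(v_k p_k/q_k) (I − 1ᵀv) = (∂v/∂q)ᵀ diag(p_k q_k/v_k) (∂v/∂q)`,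
where `v_k(q) = (1/q_k)/Σ_j (1/q_j)` and the Jacobian `(∂v/∂q)_{jk} = ∂v_k/∂q_j`. -/
theorem stmt10 (K : ℕ) (q : Fin K → ℝ) (hq : ∀ k, 0 < q k ∧ q k < 1)
    (p : Fin K → ℝ) (hp : ∀ k, p k = 1 - q k)
    (vfun : (Fin K → ℝ) → Fin K → ℝ)
    (hvfun : ∀ (x : Fin K → ℝ) (k : Fin K),
      vfun x k = (1 / x k) / ∑ j, 1 / x j)
    (v : Fin K → ℝ) (hv : v = vfun q)
    (J : Matrix (Fin K) (Fin K) ℝ)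
    (hJ : ∀ j k, J j k = deriv (fun t => vfun (Function.update q j t) k) (q j)) :
    (1 - vecMulVec v (fun _ => 1)) *
        Matrix.diagonal (fun k => v k * p k / q k) *
        (1 - vecMulVec (fun _ => 1) v) =
      Jᵀ * Matrix.diagonal (fun k => p k * q k / v k) * J := by
  rcases Nat.eq_zero_or_pos K with hK | hK
  · subst hK; ext j k; exact j.elim0
  set S : ℝ := ∑ j, 1 / q j with hSdef
  have hq0 : ∀ k, q k ≠ 0 := fun k => (hq k).1.ne'
  have hSpos : 0 < S := Finset.sum_pos (fun i _ => by
      have := (hq i).1; positivity) ⟨⟨0, hK⟩, Finset.mem_univ _⟩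
  have hSne : S ≠ 0 := hSpos.ne'
  have hvk : ∀ k, v k = (1 / q k) / S := by
    intro k; rw [hv, hvfun]
  have hSv : ∀ k, S * v k = 1 / q k := by
    intro k; rw [hvk, mul_comm, div_mul_cancel₀ _ hSne]
  have hqv : ∀ k, q k * v k = 1 / S := by
    intro k
    rw [hvk]
    field_simp
    exact div_self (hq0 k)
  have hv0 : ∀ k, v k ≠ 0 := by
    intro k; rw [hvk]
    have := (hq k).1
    positivity
  set M : Matrix (Fin K) (Fin K) ℝ := diagonal v - vecMulVec v v with hM
  have hMapp : ∀ j k, M j k = (if j = k then v j else 0) - v j * v k := by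
    intro j k
    simp [hM, diagonal_apply, vecMulVec_apply]
  have hMsymm : Mᵀ = M := by
    ext j k
    simp only [transpose_apply, hMapp]
    rcases eq_or_ne j k with h | h
    · subst h; ring
    · simp [h, Ne.symm h]; ring
  -- Jacobian formula
  have hJ' : J = -(S • (diagonal v * M)) := by
    ext j k
    have hupd : Function.update q j (q j) = q := Function.update_eq_self j q
    have hden : HasDerivAt (fun t => ∑ i, 1 / Function.update q j t i)
        (-(1 / (q j) ^ 2)) (q j) := by
      have h := HasDerivAt.sum (u := Finset.univ)
        (A := fun i t => 1 / Function.update q j t i)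
        (A' := fun i => if i = j then -(1 / (q j) ^ 2) else 0)
        (x := q j) ?_
      · simpa [Finset.sum_fn] using h
      · intro i _
        rcases eq_or_ne i j with h | h
        · subst h
          simp only [if_pos rfl]
          have heq : (fun t => 1 / Function.update q i t i) = fun t => t⁻¹ := by
            funext t; rw [Function.update_self, one_div]
          rw [heq, show -(1 / (q i) ^ 2) = -((q i) ^ 2)⁻¹ by rw [one_div]]
          exact hasDerivAt_inv (hq0 i)
        · simp only [if_neg h]
          have heq : (fun t => 1 / Function.update q j t i) = fun _ => 1 / q i := by
            funext t; rw [Function.update_of_ne h]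
          rw [heq]
          exact hasDerivAt_const _ _
    have hnum : HasDerivAt (fun t => 1 / Function.update q j t k)
        (if k = j then -(1 / (q j) ^ 2) else 0) (q j) := by
      rcases eq_or_ne k j with h | h
      · subst h
        simp only [if_pos rfl]
        have heq : (fun t => 1 / Function.update q k t k) = fun t => t⁻¹ := by
          funext t; rw [Function.update_self, one_div]
        rw [heq, show -(1 / (q k) ^ 2) = -((q k) ^ 2)⁻¹ by rw [one_div]]
        exact hasDerivAt_inv (hq0 k)
      · simp only [if_neg h]
        have heq : (fun t => 1 / Function.update q j t k) = fun _ => 1 / q k := by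
          funext t; rw [Function.update_of_ne h]
        rw [heq]
        exact hasDerivAt_const _ _
    have hdenne : (∑ i, 1 / Function.update q j (q j) i) ≠ 0 := by
      rw [hupd]; exact hSne
    have hdiv := hnum.div hden hdenne
    have hfun : (fun t => vfun (Function.update q j t) k)
        = fun t => (1 / Function.update q j t k) / ∑ i, 1 / Function.update q j t i := by
      funext t; rw [hvfun]
    rw [hJ j k, hfun, show (fun t => (1 / Function.update q j t k) / ∑ i, 1 / Function.update q j t i)
        = (fun t => 1 / Function.update q j t k) / (fun t => ∑ i, 1 / Function.update q j t i) from rfl,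
      hdiv.deriv, hupd]
    rw [← hSdef]
    simp only [Matrix.neg_apply, Matrix.smul_apply, smul_eq_mul]
    rw [diagonal_mul, hMapp]
    have h1j : (1 : ℝ) / q j = S * v j := (hSv j).symm
    have h1k : (1 : ℝ) / q k = S * v k := (hSv k).symm
    rcases eq_or_ne j k with h | h
    · subst h
      rw [show (1 : ℝ) / (q j) ^ 2 = (1 / q j) * (1 / q j) by ring, h1j]
      simp only [eq_self_iff_true, if_true]
      field_simp
      ring
    · simp only [if_neg h, if_neg (Ne.symm h)]
      rw [show (1 : ℝ) / (q j) ^ 2 = (1 / q j) * (1 / q j) by ring, h1j, h1k]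
      field_simp
      ring
  -- basic matrix identities
  have h1 : (1 - vecMulVec v (fun _ => 1)) * diagonal v = M := by
    ext j k
    rw [mul_diagonal, hMapp]
    simp only [Matrix.sub_apply, one_apply, vecMulVec_apply]
    rcases eq_or_ne j k with h | h
    · subst h; simp; ring
    · simp [h]
  have h2 : diagonal v * (1 - vecMulVec (fun _ => 1) v) = M := by
    ext j k
    rw [diagonal_mul, hMapp]
    simp only [Matrix.sub_apply, one_apply, vecMulVec_apply]
    rcases eq_or_ne j k with h | h
    · subst h; simp; ring
    · simp [h]
  have hD : diagonal (fun k => v k * p k / q k)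
      = diagonal v * (S • diagonal p) * diagonal v := by
    have : S • diagonal p = diagonal (fun k => S * p k) := by
      ext j k; rcases eq_or_ne j k with h | h
      · subst h; simp [diagonal_apply]
      · simp [diagonal_apply, h]
    rw [this, diagonal_mul_diagonal, diagonal_mul_diagonal]
    have hfg : (fun k => v k * p k / q k) = fun i => v i * (S * p i) * v i := by
      funext k
      rw [div_eq_mul_one_div, ← hSv k]
      ring
    rw [hfg]
  have hE : diagonal v * diagonal (fun k => p k * q k / v k) * diagonal v
      = (1 / S) • diagonal p := by
    have : (1 / S : ℝ) • diagonal p = diagonal (fun k => (1 / S) * p k) := by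
      ext j k; rcases eq_or_ne j k with h | h
      · subst h; simp [diagonal_apply]
      · simp [diagonal_apply, h]
    rw [this, diagonal_mul_diagonal, diagonal_mul_diagonal]
    have hfg : (fun i => v i * (p i * q i / v i) * v i) = fun k => 1 / S * p k := by
      funext k
      rw [show v k * (p k * q k / v k) * v k = p k * (q k * v k) * (v k / v k) by ring,
        div_self (hv0 k), hqv k]
      ring
    rw [hfg]
  -- assemble
  rw [hD, hJ']
  rw [transpose_neg, transpose_smul, transpose_mul, hMsymm, diagonal_transpose]
  have hL : (1 - vecMulVec v fun _ => 1) * (diagonal v * (S • diagonal p) * diagonal v) *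
      (1 - vecMulVec (fun _ => 1) v) = S • (M * diagonal p * M) := by
    calc (1 - vecMulVec v fun _ => 1) * (diagonal v * (S • diagonal p) * diagonal v) *
        (1 - vecMulVec (fun _ => 1) v)
        = ((1 - vecMulVec v fun _ => 1) * diagonal v) * (S • diagonal p) *
          (diagonal v * (1 - vecMulVec (fun _ => 1) v)) := by
          simp only [Matrix.mul_assoc]
      _ = M * (S • diagonal p) * M := by rw [h1, h2]
      _ = S • (M * diagonal p * M) := by
          rw [Matrix.mul_smul, Matrix.smul_mul]
  have hR : -(S • (M * diagonal v)) * diagonal (fun k => p k * q k / v k) *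
      -(S • (diagonal v * M)) = S • (M * diagonal p * M) := by
    simp only [Matrix.neg_mul, Matrix.mul_neg, neg_neg]
    rw [Matrix.smul_mul, Matrix.smul_mul, Matrix.mul_smul, smul_smul]
    have : M * diagonal v * diagonal (fun k => p k * q k / v k) * (diagonal v * M)
        = (1 / S) • (M * diagonal p * M) := by
      calc M * diagonal v * diagonal (fun k => p k * q k / v k) * (diagonal v * M)
          = M * (diagonal v * diagonal (fun k => p k * q k / v k) * diagonal v) * M := by
            simp only [Matrix.mul_assoc]
        _ = M * ((1 / S) • diagonal p) * M := by rw [hE]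
        _ = (1 / S) • (M * diagonal p * M) := by
            rw [Matrix.mul_smul, Matrix.smul_mul]
    rw [this, smul_smul]
    congr 1
    field_simp
  rw [hL, hR]
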